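/- Let (T,v) be a 1-pseudo-regular rooted tree and let A ⊂ V(T) be a non-empty finite set of vertices such that the induced subgraph G(A) is connected. Then |∂A|/|A| ≥ 1/3. -/

import Mathlib

open scoped ENNReal

namespace TreePaper

variable {V : Type*}

/-- The (outer) vertex boundary `∂A = {w : d(w,A) = 1}` of a set of vertices. -/
def vboundary (G : SimpleGraph V) (A : Set V) : Set V :=
  {w | w ∉ A ∧ ∃ a ∈ A, G.Adj w a}

/-- The ratio `|∂A| / |A|`, valued in `ℝ≥0∞`. -/
noncomputable def eratio (G : SimpleGraph V) (A : Finset V) : ℝ≥0∞ :=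
  ((vboundary G (A : Set V)).encard : ℝ≥0∞) / (A.card : ℝ≥0∞)

/-- `m` lies on the geodesic `[x y]`. -/
def Btw (G : SimpleGraph V) (x m y : V) : Prop :=
  G.dist x m + G.dist m y = G.dist x y

/-- `(T,v)` is `K`-pseudo-regular: for every `t` and every `a ∈ S(v,t)` there are two
distinct points `y₁ y₂ ∈ S(v,t+K) ∩ T^v_a`. -/
def KPseudoRegular (G : SimpleGraph V) (v : V) (K : ℕ) : Prop :=
  ∀ a : V, ∃ y₁ y₂ : V, y₁ ≠ y₂ ∧
    G.dist v y₁ = G.dist v a + K ∧ Btw G v a y₁ ∧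
    G.dist v y₂ = G.dist v a + K ∧ Btw G v a y₂

/-- In a tree, a point on the geodesic `[v y]` is determined by its distance from `v`. -/
private lemma btw_unique (G : SimpleGraph V) (hT : G.IsTree) {v a a' y : V}
    (h1 : Btw G v a y) (h2 : Btw G v a' y) (hd : G.dist v a = G.dist v a') : a = a' := by
  obtain ⟨p, hp⟩ := hT.isConnected.exists_walk_length_eq_dist v a
  obtain ⟨q, hq⟩ := hT.isConnected.exists_walk_length_eq_dist a y
  obtain ⟨p', hp'⟩ := hT.isConnected.exists_walk_length_eq_dist v a'
  obtain ⟨q', hq'⟩ := hT.isConnected.exists_walk_length_eq_dist a' y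
  have hW : (p.append q).length = G.dist v y := by
    rw [SimpleGraph.Walk.length_append, hp, hq]; exact h1
  have hW' : (p'.append q').length = G.dist v y := by
    rw [SimpleGraph.Walk.length_append, hp', hq']; exact h2
  have hP := (p.append q).isPath_of_length_eq_dist hW
  have hP' := (p'.append q').isPath_of_length_eq_dist hW'
  have heq : p.append q = p'.append q' := (hT.existsUnique_path v y).unique hP hP'
  have h1' : (p.append q).getVert (G.dist v a) = a := by
    rw [SimpleGraph.Walk.getVert_append]
    simp [hp]
  have h2' : (p'.append q').getVert (G.dist v a') = a' := by
    rw [SimpleGraph.Walk.getVert_append]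
    simp [hp']
  rw [← h1', ← h2', heq, hd]

/-- If `(T,v)` is a `1`-pseudo-regular rooted tree and `A` is a non-empty
finite set of vertices whose induced subgraph `G(A)` is connected, then `|∂A|/|A| ≥ 1/3`. -/
theorem eratio_ge_third_of_onePseudoRegular (G : SimpleGraph V) (v : V) (hT : G.IsTree)
    (hpr : KPseudoRegular G v 1)
    (A : Finset V) (hA : A.Nonempty) (hconn : (G.induce (A : Set V)).Connected) :
    (1 : ℝ≥0∞) / 3 ≤ eratio G A := by
  classical
  -- choose the two children of each vertex
  choose y1 y2 hne hd1 hb1 hd2 hb2 using hpr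
  -- each vertex is adjacent to its children
  have hadj1 : ∀ a, G.Adj a (y1 a) := by
    intro a
    rw [← SimpleGraph.dist_eq_one_iff_adj]
    have := hb1 a
    have := hd1 a
    unfold Btw at *
    omega
  have hadj2 : ∀ a, G.Adj a (y2 a) := by
    intro a
    rw [← SimpleGraph.dist_eq_one_iff_adj]
    have := hb2 a
    have := hd2 a
    unfold Btw at *
    omega
  -- parent uniqueness: if two children coincide, the parents coincide
  have hpar : ∀ a a' : V, ∀ c c' : V,
      Btw G v a c → Btw G v a' c' → G.dist v c = G.dist v a + 1 →
      G.dist v c' = G.dist v a' + 1 → c = c' → a = a' := by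
    intro a a' c c' hb hb' hd hd' hcc
    subst hcc
    exact btw_unique G hT hb hb' (by omega)
  set f : V × Bool → V := fun p => if p.2 then y1 p.1 else y2 p.1 with hf
  set S : Finset V := Finset.image f (A ×ˢ (Finset.univ : Finset Bool)) with hS
  have hinj : Set.InjOn f ↑(A ×ˢ (Finset.univ : Finset Bool)) := by
    rintro ⟨a, b⟩ - ⟨a', b'⟩ - hfe
    simp only [hf] at hfe
    cases b <;> cases b' <;> simp only [if_true, if_false, Bool.false_eq_true] at hfe
    · exact Prod.ext (hpar a a' _ _ (hb2 a) (hb2 a') (hd2 a) (hd2 a') hfe) rfl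
    · exact absurd hfe.symm (by
        have : a = a' := hpar a a' _ _ (hb2 a) (hb1 a') (hd2 a) (hd1 a') hfe
        subst this
        exact hne a)
    · exact absurd hfe (by
        have : a = a' := hpar a a' _ _ (hb1 a) (hb2 a') (hd1 a) (hd2 a') hfe
        subst this
        exact hne a)
    · exact Prod.ext (hpar a a' _ _ (hb1 a) (hb1 a') (hd1 a) (hd1 a') hfe) rfl
  have hScard : S.card = 2 * A.card := by
    rw [hS, Finset.card_image_of_injOn hinj, Finset.card_product]
    simp [mul_comm]
  -- the children not in A lie in the boundary
  have hsub : (↑(S \ A) : Set V) ⊆ vboundary G ↑A := by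
    intro w hw
    simp only [Finset.coe_sdiff, Set.mem_diff, Finset.mem_coe] at hw
    obtain ⟨hwS, hwA⟩ := hw
    rw [hS, Finset.mem_image] at hwS
    obtain ⟨⟨a, b⟩, hab, hfab⟩ := hwS
    rw [Finset.mem_product] at hab
    refine ⟨hwA, a, hab.1, ?_⟩
    subst hfab
    cases b
    · simpa [hf] using (hadj2 a).symm
    · simpa [hf] using (hadj1 a).symm
  -- counting
  have hcount : A.card ≤ (S \ A).card := by
    have h1 : (S \ A).card + A.card = (S ∪ A).card := Finset.card_sdiff_add_card S A
    have h2 : S.card ≤ (S ∪ A).card := Finset.card_le_card Finset.subset_union_left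
    omega
  have hen : (A.card : ℕ∞) ≤ (vboundary G ↑A).encard := by
    calc (A.card : ℕ∞) ≤ ((S \ A).card : ℕ∞) := by exact_mod_cast hcount
      _ = (↑(S \ A) : Set V).encard := (Set.encard_coe_eq_coe_finsetCard _).symm
      _ ≤ (vboundary G ↑A).encard := Set.encard_mono hsub
  have hcard0 : (A.card : ℝ≥0∞) ≠ 0 := by
    exact_mod_cast hA.card_pos.ne'
  have hcardtop : (A.card : ℝ≥0∞) ≠ ⊤ := by simp
  calc (1 : ℝ≥0∞) / 3 ≤ 1 := by
        rw [ENNReal.div_le_iff (by norm_num) (by norm_num)]; norm_num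
    _ ≤ eratio G A := by
        rw [eratio, ENNReal.le_div_iff_mul_le (Or.inl hcard0) (Or.inl hcardtop), one_mul]
        calc (A.card : ℝ≥0∞) = ((A.card : ℕ∞) : ℝ≥0∞) := by simp
          _ ≤ _ := by exact_mod_cast hen

end TreePaper
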